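/- (Inter-agent collision avoidance part of Theorem 1.) Let ε > 0 and δ ≥ 0. Let r₁⁰, …, r_N⁰ ∈ ℝ^d be initial agent positions whose pairwise distances satisfy ‖rᵢ⁰ − rⱼ⁰‖₂ ≥ D_B for all i ≠ j, where D_B > 2ε. Set δ_max = (D_B − 2ε)/2 and λ_min = (δ + ε)/(δ_max + ε). Let Q : ℝ^d → ℝ^d be a linear map with ‖Q v‖₂ ≥ λ_min ‖v‖₂ for all v, let b ∈ ℝ^d, define desired positions rᵢᴴᵀ = Q rᵢ⁰ + b, and let actual positions rᵢ ∈ ℝ^d satisfy ‖rᵢ − rᵢᴴᵀ‖₂ ≤ δ for all i. Then ‖rᵢ − rⱼ‖₂ ≥ 2ε for all i ≠ j. -/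

import Mathlib

/-- Inter-agent collision avoidance part of Theorem 1: if initial positions are pairwise
at distance at least `D_B > 2ε`, `δ_max = (D_B − 2ε)/2`, `λ_min = (δ+ε)/(δ_max+ε)`, the
linear part `Q` of the homogeneous transformation satisfies `‖Qv‖ ≥ λ_min‖v‖`, and every
actual position deviates at most `δ` from its desired position `Q rᵢ⁰ + b`, then any two
distinct agents stay at distance at least `2ε`. -/
theorem stmt_13 {d N : ℕ}
    (ε δ D_B : ℝ) (hε : 0 < ε) (hδ : 0 ≤ δ) (hDB : 2 * ε < D_B)
    (r0 : Fin N → EuclideanSpace ℝ (Fin d))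
    (hsep : ∀ i j, i ≠ j → D_B ≤ ‖r0 i - r0 j‖)
    (δmax : ℝ) (hδmax : δmax = (D_B - 2 * ε) / 2)
    (lammin : ℝ) (hlam : lammin = (δ + ε) / (δmax + ε))
    (Q : EuclideanSpace ℝ (Fin d) →ₗ[ℝ] EuclideanSpace ℝ (Fin d))
    (hQ : ∀ v, lammin * ‖v‖ ≤ ‖Q v‖)
    (b : EuclideanSpace ℝ (Fin d))
    (r : Fin N → EuclideanSpace ℝ (Fin d))
    (hdev : ∀ i, ‖r i - (Q (r0 i) + b)‖ ≤ δ) :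
    ∀ i j, i ≠ j → 2 * ε ≤ ‖r i - r j‖ := by
  intro i j hij
  have hden : δmax + ε = D_B / 2 := by rw [hδmax]; ring
  have hDBpos : (0:ℝ) < D_B / 2 := by linarith
  have hlamval : lammin * D_B = 2 * δ + 2 * ε := by
    rw [hlam, hden]
    have : D_B ≠ 0 := by linarith
    field_simp
  have hlampos : 0 < lammin := by
    rw [hlam, hden]; positivity
  have h1 : lammin * D_B ≤ lammin * ‖r0 i - r0 j‖ :=
    mul_le_mul_of_nonneg_left (hsep i j hij) hlampos.le
  have h2 : lammin * ‖r0 i - r0 j‖ ≤ ‖Q (r0 i - r0 j)‖ := hQ _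
  have hdi := hdev i
  have hdj := hdev j
  have heq : Q (r0 i - r0 j) =
      (r i - r j) - (r i - (Q (r0 i) + b)) + (r j - (Q (r0 j) + b)) := by
    rw [map_sub]; abel
  have htri : ‖Q (r0 i - r0 j)‖ ≤ ‖r i - r j‖ + ‖r i - (Q (r0 i) + b)‖
      + ‖r j - (Q (r0 j) + b)‖ := by
    rw [heq]
    calc ‖(r i - r j) - (r i - (Q (r0 i) + b)) + (r j - (Q (r0 j) + b))‖
        ≤ ‖(r i - r j) - (r i - (Q (r0 i) + b))‖ + ‖r j - (Q (r0 j) + b)‖ :=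
          norm_add_le _ _
      _ ≤ ‖r i - r j‖ + ‖r i - (Q (r0 i) + b)‖ + ‖r j - (Q (r0 j) + b)‖ := by
          have := norm_sub_le (r i - r j) (r i - (Q (r0 i) + b))
          linarith
  linarith
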